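/- Let L be a finite-dimensional Lie algebra over any field F in which every maximal subalgebra of each maximal nilpotent subalgebra of L is a c-ideal of L, and let A be a minimal abelian ideal of L. Then every maximal subalgebra of each maximal nilpotent subalgebra of L/A is a c-ideal of L/A. -/

import Mathlib

/-! Common definitions: c-ideals and related notions for Lie algebras
(following D. Towers, "C-ideals of Lie algebras"). -/

section Defs

variable (F : Type*) {L : Type*} [Field F] [LieRing L] [LieAlgebra F L]

/-- `B` is a *c-ideal* of `L`: there is an ideal `C` of `L` with `L = B + C` and
`B ∩ C ≤ B_L`, where `B_L` is the largest ideal of `L` contained in `B`; equivalently,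
`B ∩ C` is contained in some ideal `D` of `L` with `D ≤ B`. -/
def IsCIdeal (B : LieSubalgebra F L) : Prop :=
  ∃ C : LieIdeal F L,
    B.toSubmodule ⊔ (C : Submodule F L) = ⊤ ∧
    ∃ D : LieIdeal F L, (∀ x ∈ D, x ∈ B) ∧ ∀ x ∈ B, x ∈ C → x ∈ D

/-- A maximal subalgebra of `L`: proper, and maximal among proper subalgebras. -/
def IsMaximalSubalgebra (M : LieSubalgebra F L) : Prop :=
  M ≠ ⊤ ∧ ∀ K : LieSubalgebra F L, M < K → K = ⊤

/-- `B` is a maximal subalgebra of the subalgebra `C`: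
`B` is a proper subalgebra of `C`, maximal among proper subalgebras contained in `C`. -/
def IsMaximalSubalgebraOf (B C : LieSubalgebra F L) : Prop :=
  B < C ∧ ∀ K : LieSubalgebra F L, B < K → K ≤ C → K = C

/-- A maximal nilpotent subalgebra of `L`:
nilpotent and maximal among nilpotent subalgebras. -/
def IsMaximalNilpotentSubalgebra (C : LieSubalgebra F L) : Prop :=
  LieRing.IsNilpotent C ∧
    ∀ D : LieSubalgebra F L, LieRing.IsNilpotent D → C ≤ D → C = D

/-- The natural quotient map `L → L ⧸ I` as a morphism of Lie algebras. -/
def quotMk (I : LieIdeal F L) : L →ₗ⁅F⁆ L ⧸ I :=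
  { (LieSubmodule.Quotient.mk' I).toLinearMap with
    map_lie' := fun {_ _} => rfl }

/-- A supersolvable Lie algebra: there is a chain of ideals `0 = L_0 ⊆ ⋯ ⊆ L_n = L`
with `dim L_i = i` for each `0 ≤ i ≤ n`. -/
def IsSupersolvable (L : Type*) [LieRing L] [LieAlgebra F L] : Prop :=
  ∃ (n : ℕ) (c : ℕ → LieIdeal F L), Monotone c ∧ c 0 = ⊥ ∧ c n = ⊤ ∧
    ∀ i ≤ n, Module.finrank F (c i) = i

/-- A minimal abelian ideal of `L`: a nonzero abelian ideal `A` such that the only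
ideals of `L` contained in `A` are `0` and `A`. -/
def IsMinimalAbelianIdeal (A : LieIdeal F L) : Prop :=
  A ≠ ⊥ ∧ IsLieAbelian A ∧ ∀ I : LieIdeal F L, I ≤ A → I = ⊥ ∨ I = A

/-- The one-dimensional subspace spanned by `x`, as a Lie subalgebra
(it is closed under the bracket since `⁅x,x⁆ = 0`). -/
def lineSpan (x : L) : LieSubalgebra F L :=
  { Submodule.span F {x} with
    lie_mem' := by
      intro a b ha hb
      replace ha : a ∈ Submodule.span F {x} := ha
      replace hb : b ∈ Submodule.span F {x} := hb
      rw [Submodule.mem_span_singleton] at ha hb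
      obtain ⟨c, rfl⟩ := ha
      obtain ⟨d, rfl⟩ := hb
      show ⁅c • x, d • x⁆ ∈ Submodule.span F {x}
      simp }

/-- The Frattini subalgebra of a Lie algebra: the intersection of all maximal subalgebras. -/
def frattiniSubalgebra (L : Type*) [LieRing L] [LieAlgebra F L] : LieSubalgebra F L :=
  sInf {M : LieSubalgebra F L | IsMaximalSubalgebra F M}

/-- An almost abelian Lie algebra `K`: `K = K² ⊕ Fx` for some `x ∈ K`, where the derived
subalgebra `K²` is abelian and `⁅x, y⁆ = y` for all `y ∈ K²`. -/
def IsAlmostAbelian (K : Type*) [LieRing K] [LieAlgebra F K] : Prop :=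
  ∃ x : K, IsLieAbelian (LieAlgebra.derivedSeries F K 1) ∧
    (∀ y ∈ LieAlgebra.derivedSeries F K 1, ⁅x, y⁆ = y) ∧
    (LieAlgebra.derivedSeries F K 1 : Submodule F K) ⊔ Submodule.span F {x} = ⊤ ∧
    (LieAlgebra.derivedSeries F K 1 : Submodule F K) ⊓ Submodule.span F {x} = ⊥

end Defs
section AuxLemmas

open Module LieModule

variable {F : Type*} {L : Type*} [Field F] [LieRing L] [LieAlgebra F L]

/-- Powers of the internal adjoint action agree with the ambient one. -/
private lemma ad_pow_coe (S : LieSubalgebra F L) (x y : S) (j : ℕ) :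
    (((LieAlgebra.ad F S x ^ j) y : S) : L) = (LieAlgebra.ad F L (x : L) ^ j) (y : L) := by
  induction j generalizing y with
  | zero => simp
  | succ j ih =>
    rw [pow_succ, pow_succ]
    simp only [Module.End.mul_apply]
    rw [ih]
    congr 1

/-- The sum of a Lie subalgebra and a Lie ideal, as a Lie subalgebra. -/
private def supIdeal (S : LieSubalgebra F L) (A : LieIdeal F L) : LieSubalgebra F L :=
  { S.toSubmodule ⊔ (A : Submodule F L) with
    lie_mem' := by
      intro x y hx hy
      replace hx : x ∈ S.toSubmodule ⊔ (A : Submodule F L) := hx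
      replace hy : y ∈ S.toSubmodule ⊔ (A : Submodule F L) := hy
      obtain ⟨s, hs, a, ha, rfl⟩ := Submodule.mem_sup.mp hx
      obtain ⟨t, ht, b, hb, rfl⟩ := Submodule.mem_sup.mp hy
      show ⁅s + a, t + b⁆ ∈ S.toSubmodule ⊔ (A : Submodule F L)
      have h1 : ⁅s, t⁆ ∈ S.toSubmodule := S.lie_mem hs ht
      have h2 : ⁅s, b⁆ ∈ A := A.lie_mem hb
      have h3 : ⁅a, t + b⁆ ∈ A := by
        rw [← lie_skew]
        exact neg_mem (A.lie_mem ha)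
      have heq : ⁅s + a, t + b⁆ = ⁅s, t⁆ + (⁅s, b⁆ + ⁅a, t + b⁆) := by
        simp [lie_add, add_lie]; abel
      rw [heq]
      exact Submodule.add_mem _ (Submodule.mem_sup_left h1)
        (Submodule.mem_sup_right (A.toSubmodule.add_mem h2 h3)) }

private lemma supIdeal_coe (S : LieSubalgebra F L) (A : LieIdeal F L) :
    (supIdeal S A).toSubmodule = S.toSubmodule ⊔ (A : Submodule F L) := rfl

private lemma mem_supIdeal {S : LieSubalgebra F L} {A : LieIdeal F L} {x : L} :
    x ∈ supIdeal S A ↔ x ∈ S.toSubmodule ⊔ (A : Submodule F L) := Iff.rfl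

/-- A subalgebra of a nilpotent Lie algebra (realized as a smaller subalgebra) is nilpotent. -/
private lemma isNilpotent_of_le {K₁ K₂ : LieSubalgebra F L} (h : K₁ ≤ K₂)
    (hn : LieRing.IsNilpotent K₂) : LieRing.IsNilpotent K₁ := by
  haveI := hn
  exact Function.Injective.lieAlgebra_isNilpotent (f := LieSubalgebra.inclusion h)
    (LieSubalgebra.inclusion_injective h)

variable [FiniteDimensional F L]

private lemma findim_subalg (S : LieSubalgebra F L) : FiniteDimensional F S :=
  inferInstanceAs (FiniteDimensional F S.toSubmodule)

omit [FiniteDimensional F L] in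
/-- Uniform vanishing of powers of the ambient adjoint action of a nilpotent subalgebra. -/
private lemma exists_ad_pow_eq_zero (N : LieSubalgebra F L)
    (hN : LieRing.IsNilpotent N) :
    ∃ k, ∀ x y : N, (LieAlgebra.ad F L (x : L) ^ k) (y : L) = 0 := by
  haveI := hN
  obtain ⟨k, hk⟩ := LieModule.exists_forall_pow_toEnd_eq_zero F N N
  refine ⟨k, fun x y => ?_⟩
  have h0 : (LieAlgebra.ad F N x ^ k) y = 0 := by
    have := LinearMap.ext_iff.mp (hk x) y
    exact this
  rw [← ad_pow_coe N x y k, h0]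
  rfl

/-- The external lower central series of a subalgebra. -/
private def extLcs (N : LieSubalgebra F L) : ℕ → Submodule F L
  | 0 => N.toSubmodule
  | (k+1) => Submodule.span F {z | ∃ u ∈ N, ∃ v ∈ extLcs N k, z = ⁅u, v⁆}

private lemma exists_extLcs_eq_bot (N : LieSubalgebra F L)
    (hN : LieRing.IsNilpotent N) : ∃ k, extLcs N k = ⊥ := by
  obtain ⟨k, hk⟩ := (LieModule.isNilpotent_iff F N N).mp hN
  refine ⟨k, le_bot_iff.mp ?_⟩
  have key : ∀ j, extLcs N j ≤
      Submodule.map (N.toSubmodule.subtype)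
        (LieSubmodule.toSubmodule (lowerCentralSeries F N N j)) := by
    intro j
    induction j with
    | zero =>
      intro z hz
      exact Submodule.mem_map.mpr ⟨⟨z, hz⟩, trivial, rfl⟩
    | succ j ih =>
      show Submodule.span F _ ≤ _
      rw [Submodule.span_le]
      rintro z ⟨u, hu, v, hv, rfl⟩
      obtain ⟨w, hw, rfl⟩ := Submodule.mem_map.mp (ih hv)
      refine Submodule.mem_map.mpr ⟨⁅(⟨u, hu⟩ : N), w⁆, ?_, rfl⟩
      rw [LieSubmodule.mem_toSubmodule, lowerCentralSeries_succ]
      exact LieSubmodule.lie_mem_lie (LieSubmodule.mem_top _) hw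
  refine (key k).trans ?_
  rw [hk]
  simp

/-- Existence of a maximal nilpotent subalgebra containing a given nilpotent subalgebra. -/
private lemma exists_maximalNilpotent (M : LieSubalgebra F L)
    (hM : LieRing.IsNilpotent M) :
    ∃ N : LieSubalgebra F L, M ≤ N ∧ LieRing.IsNilpotent N ∧
      ∀ D : LieSubalgebra F L, LieRing.IsNilpotent D → N ≤ D → N = D := by
  set s : Set ℕ :=
    {n | ∃ N : LieSubalgebra F L, (LieRing.IsNilpotent N ∧ M ≤ N) ∧
      Module.finrank F N = n} with hs
  have hne : s.Nonempty := ⟨Module.finrank F M, M, ⟨hM, le_refl M⟩, rfl⟩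
  have hbdd : BddAbove s := by
    refine ⟨Module.finrank F L, ?_⟩
    rintro n ⟨N, -, rfl⟩
    exact Submodule.finrank_le N.toSubmodule
  obtain ⟨N, ⟨hNnil, hMN⟩, hNr⟩ := Nat.sSup_mem hne hbdd
  refine ⟨N, hMN, hNnil, ?_⟩
  intro D hD hND
  have hle : Module.finrank F D ≤ Module.finrank F N := by
    rw [hNr]
    exact le_csSup hbdd ⟨D, ⟨hD, hMN.trans hND⟩, rfl⟩
  have : N.toSubmodule = D.toSubmodule :=
    Submodule.eq_of_le_of_finrank_le hND hle
  exact (LieSubalgebra.toSubmodule_inj N D).mp this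

end AuxLemmas
section StepNilpotent

open Module LieModule

variable {F : Type*} {L : Type*} [Field F] [LieRing L] [LieAlgebra F L]
variable [FiniteDimensional F L]

set_option linter.unusedSectionVars false

/-- If `M/(M ∩ A)` is nilpotent (for an abelian ideal `A`) and `M` is a supplement of `A`
of minimal dimension (within `M ⊔ A`), then `M` is nilpotent. -/
private lemma step_nilpotent (A : LieIdeal F L) (hAab : IsLieAbelian A)
    (M : LieSubalgebra F L)
    (hquot : ∃ k, ∀ x ∈ lowerCentralSeries F M M k, (x : L) ∈ A)
    (hmin : ∀ K : LieSubalgebra F L,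
      K.toSubmodule ⊔ (A : Submodule F L) = M.toSubmodule ⊔ (A : Submodule F L) →
      Module.finrank F M ≤ Module.finrank F K) :
    LieRing.IsNilpotent M := by
  haveI : FiniteDimensional F M := findim_subalg M
  obtain ⟨k₁, hk₁⟩ := hquot
  -- stabilization of the lower central series
  set r : ℕ → ℕ := fun n => Module.finrank F (LieSubmodule.toSubmodule
    (lowerCentralSeries F M M n)) with hr
  have hranti : ∀ {p q : ℕ}, p ≤ q → r q ≤ r p := by
    intro p q hpq
    exact Submodule.finrank_mono (antitone_lowerCentralSeries F M M hpq)
  obtain ⟨n₂, hn₂⟩ : ∃ n₂, r n₂ = sInf (Set.range r) :=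
    Nat.sInf_mem (Set.range_nonempty r)
  set m : ℕ := max k₁ n₂ with hm
  have hrm : r m = r n₂ := le_antisymm (hranti (le_max_right _ _)) (hn₂ ▸ Nat.sInf_le ⟨m, rfl⟩)
  have hrm1 : r (m + 1) = r m := by
    refine le_antisymm (hranti (Nat.le_succ m)) ?_
    rw [hrm, hn₂]
    exact Nat.sInf_le ⟨m + 1, rfl⟩
  set J : LieIdeal F M := lowerCentralSeries F M M m with hJdef
  have hJsucc : lowerCentralSeries F M M (m + 1) = J := by
    have hle : LieSubmodule.toSubmodule (lowerCentralSeries F M M (m + 1)) ≤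
        LieSubmodule.toSubmodule (lowerCentralSeries F M M m) :=
      antitone_lowerCentralSeries F M M (Nat.le_succ m)
    have heq := Submodule.eq_of_le_of_finrank_le hle hrm1.ge
    exact LieSubmodule.toSubmodule_injective heq
  have hJA : ∀ x ∈ J, (x : L) ∈ A := fun x hx =>
    hk₁ x (antitone_lowerCentralSeries F M M (le_max_left k₁ n₂) hx)
  by_cases hJbot : J = ⊥
  · exact LieModule.IsNilpotent.mk (M := M) hJbot
  have hbr : ⁅(⊤ : LieIdeal F M), J⁆ = J := by
    conv_rhs => rw [← hJsucc]
    rw [LieModule.lowerCentralSeries_succ]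
  have hxex : ∃ x : M, ¬ _root_.IsNilpotent (toEnd F M J x) := by
    by_contra hall
    push_neg at hall
    have hnil : LieModule.IsNilpotent M J :=
      LieAlgebra.isEngelian_of_isNoetherian (J : LieSubmodule F M M) hall
    obtain ⟨k, hk⟩ := (LieSubmodule.isNilpotent_iff_exists_lcs_eq_bot
      (J : LieSubmodule F M M)).mp hnil
    have hJfix : ∀ j, LieSubmodule.lcs j (J : LieSubmodule F M M) = J := by
      intro j
      induction j with
      | zero => rfl
      | succ j ih => rw [LieSubmodule.lcs_succ, ih, hbr]
    exact hJbot (by rw [hJfix k] at hk; exact hk)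
  obtain ⟨x, hx⟩ := hxex
  set f : Module.End F M := LieAlgebra.ad F M x with hf
  have hcoe : ∀ (p : ℕ) (y : J), ((toEnd F M J x ^ p) y : M) = (f ^ p) (y : M) :=
    fun p y => LieSubmodule.coe_toEnd_pow F M M J x y p
  have hfnotnil : ¬ _root_.IsNilpotent f := by
    rintro ⟨p, hp⟩
    apply hx
    refine ⟨p, LinearMap.ext fun y => ?_⟩
    have h0 : ((toEnd F M J x ^ p) y : M) = 0 := by rw [hcoe p y, hp]; rfl
    rw [LinearMap.zero_apply]
    exact Subtype.ext h0
  have hpow_mem : ∀ (j : ℕ) (y : M), (f ^ j) y ∈ lowerCentralSeries F M M j := by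
    intro j
    induction j with
    | zero => intro y; simp
    | succ j ih =>
      intro y
      rw [pow_succ']
      simp only [Module.End.mul_apply]
      rw [LieModule.lowerCentralSeries_succ]
      exact LieSubmodule.lie_mem_lie (LieSubmodule.mem_top _) (ih y)
  obtain ⟨n₁, hn₁⟩ := Filter.eventually_atTop.mp
    (LinearMap.eventually_codisjoint_ker_pow_range_pow f)
  set n := max n₁ (m + 1) with hn
  have hcompl := hn₁ n (le_max_left _ _)
  have hsuptop : LinearMap.ker (f ^ n) ⊔ LinearMap.range (f ^ n) = ⊤ :=
    codisjoint_iff.mp hcompl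
  have hrangeJ : LinearMap.range (f ^ n) ≤ LieSubmodule.toSubmodule J := by
    rintro _ ⟨y, rfl⟩
    have h1 : (f ^ n) y ∈ lowerCentralSeries F M M n := hpow_mem n y
    have h2 : m ≤ n := le_trans (Nat.le_succ m) (le_max_right _ _)
    exact antitone_lowerCentralSeries F M M h2 h1
  set K : LieSubalgebra F M := LieSubalgebra.engel F x with hK
  have hkerK : LinearMap.ker (f ^ n) ≤ K.toSubmodule := by
    intro y hy
    show y ∈ K
    rw [LieSubalgebra.mem_engel_iff]
    exact ⟨n, hy⟩
  have hKne : K ≠ ⊤ := by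
    intro htop
    apply hfnotnil
    refine ⟨Module.finrank F M, ?_⟩
    ext y
    have hyK : y ∈ K := htop ▸ trivial
    rw [LieSubalgebra.mem_engel_iff] at hyK
    obtain ⟨p, hp⟩ := hyK
    have hker : y ∈ LinearMap.ker (f ^ p) := hp
    have := Module.End.ker_pow_le_ker_pow_finrank f p hker
    simpa using this
  set K' : LieSubalgebra F L := K.map M.incl with hK'
  have hK'M : K'.toSubmodule ≤ M.toSubmodule := by
    rintro z hz
    obtain ⟨y, hy, rfl⟩ := Submodule.mem_map.mp hz
    exact y.2
  have hsup : K'.toSubmodule ⊔ (A : Submodule F L) = M.toSubmodule ⊔ (A : Submodule F L) := by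
    refine le_antisymm (sup_le (hK'M.trans le_sup_left) le_sup_right) ?_
    refine sup_le ?_ le_sup_right
    intro y hy
    obtain ⟨u, hu, v, hv, huv⟩ :=
      Submodule.mem_sup.mp (hsuptop ▸ (Submodule.mem_top : (⟨y, hy⟩ : M) ∈ ⊤))
    have h1 : (u : L) ∈ K'.toSubmodule := Submodule.mem_map.mpr ⟨u, hkerK hu, rfl⟩
    have h2 : (v : L) ∈ A := hJA v (hrangeJ hv)
    have h3 : y = (u : L) + (v : L) := by
      have := congrArg (Subtype.val) huv
      exact this.symm
    rw [h3]
    exact Submodule.add_mem _ (Submodule.mem_sup_left h1) (Submodule.mem_sup_right h2)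
  have hrank := hmin K' hsup
  have hKlt : Module.finrank F K < Module.finrank F M := by
    apply Submodule.finrank_lt
    refine (lt_of_le_of_ne le_top (fun heq => hKne ?_)).ne
    apply (LieSubalgebra.toSubmodule_inj K ⊤).mp
    rw [heq]
    rfl
  have hle2 : Module.finrank F K' ≤ Module.finrank F K :=
    Submodule.finrank_map_le (M.incl : M →ₗ[F] L) K.toSubmodule
  omega

end StepNilpotent
open Module LieModule in
/-- If every maximal subalgebra of each maximal nilpotent subalgebra of
`L` is a c-ideal of `L`, and `A` is a minimal abelian ideal of `L`, then every maximal
subalgebra of each maximal nilpotent subalgebra of `L/A` is a c-ideal of `L/A`. -/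
theorem quotient_forall_maximal_of_maximalNilpotent_isCIdeal {F L : Type*} [Field F]
    [LieRing L] [LieAlgebra F L] [FiniteDimensional F L]
    (h : ∀ C : LieSubalgebra F L, IsMaximalNilpotentSubalgebra F C →
      ∀ B : LieSubalgebra F L, IsMaximalSubalgebraOf F B C → IsCIdeal F B)
    (A : LieIdeal F L) (hA : IsMinimalAbelianIdeal F A) :
    ∀ C : LieSubalgebra F (L ⧸ A), IsMaximalNilpotentSubalgebra F C →
      ∀ B : LieSubalgebra F (L ⧸ A), IsMaximalSubalgebraOf F B C → IsCIdeal F B := by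
  intro Cq hCq Bq hBq
  classical
  set π : L →ₗ⁅F⁆ L ⧸ A := quotMk F A with hπ
  have hπs : Function.Surjective π := LieSubmodule.Quotient.surjective_mk' A
  have hker : ∀ z : L, π z = 0 ↔ z ∈ A := fun z => LieSubmodule.Quotient.mk_eq_zero A
  set πₗ : L →ₗ[F] L ⧸ A := (π : L →ₗ[F] L ⧸ A) with hπₗ
  have hπls : Function.Surjective πₗ := hπs
  have hkerl : LinearMap.ker πₗ = (A : Submodule F L) := by
    ext z
    simp only [LinearMap.mem_ker, LieSubmodule.mem_toSubmodule]
    exact hker z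
  set U : LieSubalgebra F L := Cq.comap π with hU
  set B : LieSubalgebra F L := Bq.comap π with hB
  have hUs : U.toSubmodule = Submodule.comap πₗ Cq.toSubmodule := rfl
  have hAU : (A : Submodule F L) ≤ U.toSubmodule := by
    intro z hz
    show π z ∈ Cq
    rw [(hker z).mpr hz]
    exact Cq.zero_mem
  have hAB : (A : Submodule F L) ≤ B.toSubmodule := by
    intro z hz
    show π z ∈ Bq
    rw [(hker z).mpr hz]
    exact Bq.zero_mem
  have hBU : B.toSubmodule ≤ U.toSubmodule := fun z hz => hBq.1.le hz
  have hUmap : Submodule.map πₗ U.toSubmodule = Cq.toSubmodule :=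
    Submodule.map_comap_eq_of_surjective hπls _
  have hBmap : Submodule.map πₗ B.toSubmodule = Bq.toSubmodule :=
    Submodule.map_comap_eq_of_surjective hπls _
  -- a supplement to `A` inside `U` of minimal dimension
  set s : Set ℕ := {n | ∃ K : LieSubalgebra F L,
    (K.toSubmodule ⊔ (A : Submodule F L) = U.toSubmodule) ∧ Module.finrank F K = n} with hs
  have hsne : s.Nonempty := ⟨_, U, sup_eq_left.mpr hAU, rfl⟩
  obtain ⟨M, hMsup, hMrank⟩ := Nat.sInf_mem hsne
  have hmin : ∀ K : LieSubalgebra F L, K.toSubmodule ⊔ (A : Submodule F L) = U.toSubmodule →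
      Module.finrank F M ≤ Module.finrank F K :=
    fun K hK => hMrank ▸ Nat.sInf_le ⟨K, hK, rfl⟩
  have hMU : M.toSubmodule ≤ U.toSubmodule := le_sup_left.trans hMsup.le
  -- nilpotency of M
  have hMnil : LieRing.IsNilpotent M := by
    apply step_nilpotent A hA.2.1 M
    · set φ : M →ₗ⁅F⁆ L ⧸ A := π.comp M.incl with hφ
      have hrle : φ.range ≤ Cq := by
        rintro z ⟨u, rfl⟩
        exact hMU u.2
      have hnilr : LieRing.IsNilpotent φ.range := isNilpotent_of_le hrle hCq.1
      obtain ⟨k₁, hk₁⟩ := (LieModule.isNilpotent_iff F φ.range φ.range).mp hnilr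
      have hmap := LieIdeal.lowerCentralSeries_map_eq (f := φ.rangeRestrict) k₁
        φ.surjective_rangeRestrict
      rw [hk₁] at hmap
      have hle := LieIdeal.map_eq_bot_iff.mp hmap
      refine ⟨k₁, fun x hx => ?_⟩
      have hx2 := hle hx
      rw [LieHom.mem_ker] at hx2
      have hφx : φ x = 0 := by
        have := congrArg (Subtype.val) hx2
        simpa using this
      exact (hker (x : L)).mp hφx
    · intro K hK
      rw [hMsup] at hK
      exact hmin K hK
  obtain ⟨N, hMN, hNnil, hNmax2⟩ := exists_maximalNilpotent M hMnil
  set ψ : N →ₗ⁅F⁆ L ⧸ A := π.comp N.incl with hψ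
  have hNqnil : LieRing.IsNilpotent ψ.range := by
    haveI := hNnil
    exact ψ.isNilpotent_range
  have hCqNq : Cq ≤ ψ.range := by
    intro z hz
    have hz2 : z ∈ Submodule.map πₗ U.toSubmodule := by rw [hUmap]; exact hz
    obtain ⟨w, hw, rfl⟩ := Submodule.mem_map.mp hz2
    rw [← hMsup] at hw
    obtain ⟨mw, hmw, aw, haw, rfl⟩ := Submodule.mem_sup.mp hw
    refine ⟨⟨mw, hMN hmw⟩, ?_⟩
    show π mw = πₗ (mw + aw)
    rw [map_add]
    have h0 : πₗ aw = 0 := (hker aw).mpr haw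
    rw [h0, add_zero]
    rfl
  have hNqCq : Cq = ψ.range := hCq.2 ψ.range hNqnil hCqNq
  have hNU : N.toSubmodule ≤ U.toSubmodule := by
    intro z hz
    show π z ∈ Cq
    rw [hNqCq]
    exact ⟨⟨z, hz⟩, rfl⟩
  have hNsup : N.toSubmodule ⊔ (A : Submodule F L) = U.toSubmodule := by
    refine le_antisymm (sup_le hNU hAU) ?_
    rw [← hMsup]
    exact sup_le_sup_right ((LieSubalgebra.toSubmodule_le_toSubmodule M N).mpr hMN) _
  have hAmap : Submodule.map πₗ (A : Submodule F L) = ⊥ := by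
    rw [eq_bot_iff]
    rintro z hz
    obtain ⟨a, ha, rfl⟩ := Submodule.mem_map.mp hz
    show πₗ a ∈ (⊥ : Submodule F (L ⧸ A))
    rw [Submodule.mem_bot]
    exact (hker a).mpr ha
  have hNmap : Submodule.map πₗ N.toSubmodule = Cq.toSubmodule := by
    have h1 : Submodule.map πₗ (N.toSubmodule ⊔ (A : Submodule F L)) = Cq.toSubmodule := by
      rw [hNsup, hUmap]
    rw [Submodule.map_sup, hAmap, sup_bot_eq] at h1
    exact h1
  set B₀ : LieSubalgebra F L := B ⊓ N with hB₀
  have hB₀s : B₀.toSubmodule = B.toSubmodule ⊓ N.toSubmodule :=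
    LieSubalgebra.inf_toSubmodule B N
  have hmod1 : ((A : Submodule F L) ⊔ N.toSubmodule) ⊓ B.toSubmodule
      = (A : Submodule F L) ⊔ (N.toSubmodule ⊓ B.toSubmodule) :=
    sup_inf_assoc_of_le _ hAB
  have hBsum : B.toSubmodule = B₀.toSubmodule ⊔ (A : Submodule F L) := by
    have h1 : ((A : Submodule F L) ⊔ N.toSubmodule) = U.toSubmodule := by
      rw [sup_comm]; exact hNsup
    rw [h1, inf_eq_right.mpr hBU] at hmod1
    rw [hB₀s, inf_comm, sup_comm]
    exact hmod1
  have hB₀map : Submodule.map πₗ B₀.toSubmodule = Bq.toSubmodule := by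
    have h1 : Submodule.map πₗ B.toSubmodule
        = Submodule.map πₗ (B₀.toSubmodule ⊔ (A : Submodule F L)) := by rw [← hBsum]
    rw [Submodule.map_sup, hAmap, sup_bot_eq] at h1
    rw [← h1, hBmap]
  have hBqCq_ne : Bq ≠ Cq := ne_of_lt hBq.1
  have hB₀N : B₀ < N := by
    refine lt_of_le_of_ne inf_le_right ?_
    intro heq
    apply hBqCq_ne
    apply (LieSubalgebra.toSubmodule_inj Bq Cq).mp
    rw [← hB₀map, ← hNmap, heq]
  have hB₀max : ∀ K : LieSubalgebra F L, B₀ < K → K ≤ N → K = N := by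
    intro K hK1 hK2
    set Kq : LieSubalgebra F (L ⧸ A) := K.map π with hKq
    have hKqs : Kq.toSubmodule = Submodule.map πₗ K.toSubmodule := rfl
    have hBqKq : Bq ≤ Kq := by
      intro z hz
      have h1 : z ∈ Submodule.map πₗ B₀.toSubmodule := by rw [hB₀map]; exact hz
      obtain ⟨b₀, hb₀, rfl⟩ := Submodule.mem_map.mp h1
      exact ⟨b₀, hK1.le hb₀, rfl⟩
    have hKqCq : Kq ≤ Cq := by
      intro z hz
      obtain ⟨kk, hkk, rfl⟩ := hz
      exact hNU (hK2 hkk)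
    by_cases heq : Kq = Bq
    · exfalso
      apply hK1.not_ge
      intro kz hkz
      have h1 : π kz ∈ Bq := by rw [← heq]; exact ⟨kz, hkz, rfl⟩
      exact ⟨h1, hK2 hkz⟩
    · have hKqCq_eq : Kq = Cq := hBq.2 Kq (lt_of_le_of_ne hBqKq (Ne.symm heq)) hKqCq
      have hUK : U.toSubmodule = K.toSubmodule ⊔ (A : Submodule F L) := by
        have h1 : Submodule.comap πₗ (Submodule.map πₗ K.toSubmodule)
            = K.toSubmodule ⊔ LinearMap.ker πₗ := Submodule.comap_map_eq πₗ K.toSubmodule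
        rw [hkerl] at h1
        have h2 : Submodule.map πₗ K.toSubmodule = Cq.toSubmodule := by
          rw [← hKqs, hKqCq_eq]
        rw [h2] at h1
        exact hUs.trans h1
      have hNK : N.toSubmodule ≤ K.toSubmodule := by
        have h3 : (K.toSubmodule ⊔ (A : Submodule F L)) ⊓ N.toSubmodule
            = K.toSubmodule ⊔ ((A : Submodule F L) ⊓ N.toSubmodule) :=
          sup_inf_assoc_of_le _ ((LieSubalgebra.toSubmodule_le_toSubmodule K N).mpr hK2)
        have h4 : (K.toSubmodule ⊔ (A : Submodule F L)) ⊓ N.toSubmodule = N.toSubmodule := by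
          rw [← hUK]
          exact inf_eq_right.mpr hNU
        have h5 : (A : Submodule F L) ⊓ N.toSubmodule ≤ K.toSubmodule := by
          intro z hz
          have hzB₀ : z ∈ B₀ := ⟨hAB hz.1, hz.2⟩
          exact hK1.le hzB₀
        rw [h4] at h3
        rw [h3]
        exact sup_le le_rfl h5
      exact le_antisymm hK2 hNK
  obtain ⟨C, hC1, D, hD1, hD2⟩ := h N ⟨hNnil, hNmax2⟩ B₀ ⟨hB₀N, hB₀max⟩
  -- B₀ ≤ N as submodules, and the bracket ideal of A
  have hB₀Nsub : B₀.toSubmodule ≤ N.toSubmodule := hB₀s.le.trans inf_le_right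
  set LA : LieIdeal F L := ⁅(⊤ : LieIdeal F L), A⁆ with hLAdef
  have hLAle : LA ≤ A := LieSubmodule.lie_le_right A ⊤
  have hkey : ∀ b : L, b ∈ B → b ∈ ((C : Submodule F L) ⊔ (A : Submodule F L)) →
      b ∈ ((D : Submodule F L) ⊔ (A : Submodule F L)) := by
    rcases hA.2.2 LA hLAle with hcent | hfull
    · -- A is central in L
      have hzero : ∀ (z : L), ∀ a ∈ A, ⁅z, a⁆ = (0 : L) := by
        intro z a ha
        have h1 : ⁅z, a⁆ ∈ LA := LieSubmodule.lie_mem_lie (LieSubmodule.mem_top z) ha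
        rw [hcent] at h1
        exact h1
      -- N ⊔ A is nilpotent, so A ≤ N
      set NA := supIdeal N A with hNA
      have hNNA : N ≤ NA := by
        intro z hz
        exact mem_supIdeal.mpr (Submodule.mem_sup_left hz)
      obtain ⟨k, hk⟩ := exists_ad_pow_eq_zero N hNnil
      have hNAnil : LieRing.IsNilpotent NA := by
        haveI : FiniteDimensional F NA := findim_subalg NA
        rw [LieAlgebra.isNilpotent_iff_forall (R := F)]
        intro x
        obtain ⟨nn, hnn, a, ha, hxe⟩ := Submodule.mem_sup.mp (mem_supIdeal.mp x.2)
        have hadeq : ∀ w : L, ⁅(x : L), w⁆ = ⁅nn, w⁆ := by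
          intro w
          rw [← hxe, add_lie]
          have : ⁅a, w⁆ = (0 : L) := by
            rw [← lie_skew, hzero w a ha, neg_zero]
          rw [this, add_zero]
        have hkill : ∀ w ∈ NA, (LieAlgebra.ad F L nn ^ (k + 1)) w = 0 := by
          intro w hw
          obtain ⟨wn, hwn, wa, hwa, rfl⟩ := Submodule.mem_sup.mp (mem_supIdeal.mp hw)
          rw [pow_succ]
          simp only [Module.End.mul_apply]
          have h1 : LieAlgebra.ad F L nn (wn + wa) = ⁅nn, wn⁆ := by
            rw [LieAlgebra.ad_apply, lie_add, hzero nn wa hwa, add_zero]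
          rw [h1]
          exact hk ⟨nn, hnn⟩ ⟨⁅nn, wn⁆, N.lie_mem hnn hwn⟩
        refine ⟨k + 1, ?_⟩
        apply LinearMap.ext
        intro y
        rw [LinearMap.zero_apply]
        apply Subtype.ext
        rw [ad_pow_coe NA x y (k + 1)]
        have hmapeq : LieAlgebra.ad F L (x : L) = LieAlgebra.ad F L nn := by
          apply LinearMap.ext
          intro w
          rw [LieAlgebra.ad_apply, LieAlgebra.ad_apply, hadeq w]
        rw [hmapeq]
        exact hkill (y : L) y.2
      have hNAN : N = NA := hNmax2 NA hNAnil hNNA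
      have hAN : (A : Submodule F L) ≤ N.toSubmodule := by
        intro a ha
        have h1 : a ∈ NA := mem_supIdeal.mpr (Submodule.mem_sup_right ha)
        rw [← hNAN] at h1
        exact h1
      have hAB₀ : (A : Submodule F L) ≤ B₀.toSubmodule := by
        intro a ha
        exact ⟨hAB ha, hAN ha⟩
      intro b hb hbCA
      have hb2 : b ∈ ((A : Submodule F L) ⊔ ((C : Submodule F L) ⊓ B.toSubmodule)) := by
        have hmod : ((A : Submodule F L) ⊔ (C : Submodule F L)) ⊓ B.toSubmodule
            = (A : Submodule F L) ⊔ ((C : Submodule F L) ⊓ B.toSubmodule) :=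
          sup_inf_assoc_of_le _ hAB
        rw [← hmod]
        refine ⟨?_, hb⟩
        rwa [sup_comm]
      obtain ⟨a, ha, c, hc, rfl⟩ := Submodule.mem_sup.mp hb2
      have hcB₀ : c ∈ B₀ := by
        have h1 : B.toSubmodule = B₀.toSubmodule := by
          rw [hBsum, sup_eq_left.mpr hAB₀]
        have h2 : c ∈ B.toSubmodule := hc.2
        rw [h1] at h2
        exact h2
      have hcD : c ∈ D := hD2 c hcB₀ hc.1
      exact Submodule.add_mem _ (Submodule.mem_sup_right ha) (Submodule.mem_sup_left hcD)
    · -- ⁅L, A⁆ = A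
      have hAC : (A : Submodule F L) ≤ (C : Submodule F L) := by
        obtain ⟨k₂, hk₂⟩ := exists_extLcs_eq_bot N hNnil
        have htop : B₀.toSubmodule ⊔ (C : Submodule F L) = ⊤ := hC1
        have hstep : ∀ j, (A : Submodule F L) ≤ extLcs N j ⊔ (C : Submodule F L) := by
          intro j
          induction j with
          | zero =>
            have h1 : (⊤ : Submodule F L) ≤ N.toSubmodule ⊔ (C : Submodule F L) := by
              rw [← htop]
              exact sup_le_sup_right hB₀Nsub _
            exact le_trans le_top h1
          | succ j ih =>
            intro a ha
            have haA : a ∈ LieSubmodule.toSubmodule ⁅(⊤ : LieIdeal F L), A⁆ := by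
              rw [show ⁅(⊤ : LieIdeal F L), A⁆ = A from hfull]
              exact ha
            rw [LieSubmodule.lieIdeal_oper_eq_linear_span] at haA
            have hspan : Submodule.span F {m : L | ∃ (x : (⊤ : LieIdeal F L)) (n : A), ⁅(x : L), (n : L)⁆ = m}
                ≤ extLcs N (j + 1) ⊔ (C : Submodule F L) := by
              rw [Submodule.span_le]
              rintro z ⟨⟨y, -⟩, ⟨av, hav⟩, rfl⟩
              have hy : y ∈ B₀.toSubmodule ⊔ (C : Submodule F L) := by rw [htop]; trivial
              obtain ⟨p, hp, q, hq, rfl⟩ := Submodule.mem_sup.mp hy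
              have havm : av ∈ extLcs N j ⊔ (C : Submodule F L) := ih hav
              obtain ⟨v, hv, c₂, hc₂, rfl⟩ := Submodule.mem_sup.mp havm
              have hsplit : ⁅p + q, v + c₂⁆ = ⁅p, v⁆ + (⁅p, c₂⁆ + ⁅q, v + c₂⁆) := by
                rw [add_lie, lie_add]
                abel
              rw [hsplit]
              have h1 : ⁅p, v⁆ ∈ extLcs N (j + 1) := by
                apply Submodule.subset_span
                exact ⟨p, hB₀Nsub hp, v, hv, rfl⟩
              have h2 : ⁅p, c₂⁆ ∈ C := C.lie_mem hc₂
              have h3 : ⁅q, v + c₂⁆ ∈ C := by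
                rw [← lie_skew]
                exact neg_mem (C.lie_mem hq)
              exact Submodule.add_mem _ (Submodule.mem_sup_left h1)
                (Submodule.mem_sup_right (Submodule.add_mem _ h2 h3))
            exact hspan haA
        have := hstep k₂
        rw [hk₂, bot_sup_eq] at this
        exact this
      intro b hb hbCA
      have hbC : b ∈ (C : Submodule F L) := by
        rwa [sup_eq_left.mpr hAC] at hbCA
      have hb2 : b ∈ B₀.toSubmodule ⊔ (A : Submodule F L) := by
        rw [← hBsum]
        exact hb
      obtain ⟨b₀, hb₀, a, ha, rfl⟩ := Submodule.mem_sup.mp hb2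
      have haC : a ∈ C := hAC ha
      have hb₀C : b₀ ∈ C := by
        have h1 : b₀ = (b₀ + a) - a := by abel
        rw [h1]
        exact sub_mem hbC haC
      have hb₀D : b₀ ∈ D := hD2 b₀ hb₀ hb₀C
      exact Submodule.add_mem _ (Submodule.mem_sup_left hb₀D) (Submodule.mem_sup_right ha)
  -- final assembly
  have hCmap : LieSubmodule.toSubmodule (LieIdeal.map π C)
      = Submodule.map πₗ (C : Submodule F L) := LieIdeal.coe_map_of_surjective hπs
  have hDAcoe : ((D ⊔ A : LieIdeal F L) : Submodule F L)
      = (D : Submodule F L) ⊔ (A : Submodule F L) := LieSubmodule.sup_toSubmodule D A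
  have hDmap : LieSubmodule.toSubmodule (LieIdeal.map π (D ⊔ A))
      = Submodule.map πₗ ((D : Submodule F L) ⊔ (A : Submodule F L)) := by
    rw [← hDAcoe]
    exact LieIdeal.coe_map_of_surjective hπs
  refine ⟨LieIdeal.map π C, ?_, LieIdeal.map π (D ⊔ A), ?_, ?_⟩
  · rw [LieIdeal.toLieSubalgebra_toSubmodule, hCmap]
    have h1 : Submodule.map πₗ (B₀.toSubmodule ⊔ (C : Submodule F L)) = ⊤ := by
      rw [hC1, Submodule.map_top, LinearMap.range_eq_top.mpr hπls]
    rw [Submodule.map_sup] at h1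
    rw [eq_top_iff, ← h1]
    exact sup_le_sup_right hB₀map.le _
  · intro x hx
    rw [← LieSubmodule.mem_toSubmodule, hDmap] at hx
    obtain ⟨d, hd, rfl⟩ := Submodule.mem_map.mp hx
    have hdB : d ∈ B.toSubmodule := by
      have h1 : (D : Submodule F L) ≤ B.toSubmodule := by
        intro y hy
        have := hD1 y hy
        exact hB₀s.le this |>.1
      exact sup_le h1 hAB hd
    exact hdB
  · intro x hxB hxC
    obtain ⟨b, rfl⟩ := hπs x
    have hb : b ∈ B := hxB
    rw [← LieSubmodule.mem_toSubmodule, hCmap] at hxC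
    obtain ⟨c, hcC, hcb⟩ := Submodule.mem_map.mp hxC
    have hbCA : b ∈ (C : Submodule F L) ⊔ (A : Submodule F L) := by
      have h1 : b - c ∈ A := by
        apply (hker (b - c)).mp
        show πₗ (b - c) = 0
        rw [map_sub, sub_eq_zero]
        exact hcb.symm
      have h2 : b = c + (b - c) := by abel
      rw [h2]
      exact Submodule.add_mem _ (Submodule.mem_sup_left hcC) (Submodule.mem_sup_right h1)
    have hres := hkey b hb hbCA
    rw [← LieSubmodule.mem_toSubmodule, hDmap]
    exact Submodule.mem_map.mpr ⟨b, hres, rfl⟩
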